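/- For integers n ≥ 3 and m ≥ 2, the F-index of the edge R-join of the cycle C_n and the path P_m is F(C_n ∨̱_R P_m) = n(m + 2)³ + mn³ + 6(m − 1)n² + 12mn + 8m + 46n − 14. -/

import Mathlib

/-- The subdivision graph `S(G)`: a new vertex is inserted into each edge of `G`
(each edge is replaced by a path of length 2). The inserted vertices form the
right summand `↥G.edgeSet`. -/
def Sgraph {V : Type*} (G : SimpleGraph V) : SimpleGraph (V ⊕ ↥G.edgeSet) where
  Adj x y :=
    match x, y with
    | Sum.inl v, Sum.inr e => v ∈ (e : Sym2 V)
    | Sum.inr e, Sum.inl v => v ∈ (e : Sym2 V)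
    | _, _ => False
  symm := by constructor; rintro (v | e) (w | f) h <;> exact h
  loopless := by constructor; rintro (v | e) h <;> exact h

/-- The graph `R(G)`: obtained from `G` by inserting a new vertex into each edge of `G`
and joining each new vertex to the end vertices of its corresponding edge. -/
def Rgraph {V : Type*} (G : SimpleGraph V) : SimpleGraph (V ⊕ ↥G.edgeSet) where
  Adj x y :=
    match x, y with
    | Sum.inl v, Sum.inl w => G.Adj v w
    | Sum.inl v, Sum.inr e => v ∈ (e : Sym2 V)
    | Sum.inr e, Sum.inl v => v ∈ (e : Sym2 V)
    | Sum.inr _, Sum.inr _ => False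
  symm := by
    refine ⟨?_⟩
    rintro (v | e) (w | f) h
    · exact G.adj_symm h
    · exact h
    · exact h
    · exact h
  loopless := by
    refine ⟨?_⟩
    rintro (v | e) h
    · exact G.irrefl h
    · exact h

/-- The graph `Q(G)`: obtained from `G` by inserting a new vertex into each edge of `G`,
then joining by edges those pairs of new vertices lying on adjacent edges of `G`. -/
def Qgraph {V : Type*} (G : SimpleGraph V) : SimpleGraph (V ⊕ ↥G.edgeSet) where
  Adj x y :=
    match x, y with
    | Sum.inl _, Sum.inl _ => False
    | Sum.inl v, Sum.inr e => v ∈ (e : Sym2 V)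
    | Sum.inr e, Sum.inl v => v ∈ (e : Sym2 V)
    | Sum.inr e, Sum.inr f => e ≠ f ∧ ∃ v, v ∈ (e : Sym2 V) ∧ v ∈ (f : Sym2 V)
  symm := by
    refine ⟨?_⟩
    rintro (v | e) (w | f) h
    · exact h
    · exact h
    · exact h
    · exact ⟨h.1.symm, by obtain ⟨v, h1, h2⟩ := h.2; exact ⟨v, h2, h1⟩⟩
  loopless := by
    refine ⟨?_⟩
    rintro (v | e) h
    · exact h
    · exact h.1 rfl

/-- The total graph `T(G)`: obtained from `G` by inserting a new vertex into each edge,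
joining each new vertex to the end vertices of its corresponding edge, and joining by
edges those pairs of new vertices lying on adjacent edges of `G`. -/
def Tgraph {V : Type*} (G : SimpleGraph V) : SimpleGraph (V ⊕ ↥G.edgeSet) where
  Adj x y :=
    match x, y with
    | Sum.inl v, Sum.inl w => G.Adj v w
    | Sum.inl v, Sum.inr e => v ∈ (e : Sym2 V)
    | Sum.inr e, Sum.inl v => v ∈ (e : Sym2 V)
    | Sum.inr e, Sum.inr f => e ≠ f ∧ ∃ v, v ∈ (e : Sym2 V) ∧ v ∈ (f : Sym2 V)
  symm := by
    refine ⟨?_⟩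
    rintro (v | e) (w | f) h
    · exact G.adj_symm h
    · exact h
    · exact h
    · exact ⟨h.1.symm, by obtain ⟨v, h1, h2⟩ := h.2; exact ⟨v, h2, h1⟩⟩
  loopless := by
    refine ⟨?_⟩
    rintro (v | e) h
    · exact G.irrefl h
    · exact h.1 rfl

/-- The disjoint union of `H` and `K` together with all edges joining a vertex `a` of `H`
with `P a` to every vertex of `K`. -/
def joinOn {A B : Type*} (H : SimpleGraph A) (K : SimpleGraph B) (P : A → Prop) :
    SimpleGraph (A ⊕ B) where
  Adj x y :=
    match x, y with
    | Sum.inl a, Sum.inl a' => H.Adj a a'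
    | Sum.inr b, Sum.inr b' => K.Adj b b'
    | Sum.inl a, Sum.inr _ => P a
    | Sum.inr _, Sum.inl a => P a
  symm := by
    refine ⟨?_⟩
    rintro (a | b) (a' | b') h
    · exact H.adj_symm h
    · exact h
    · exact h
    · exact K.adj_symm h
  loopless := by
    refine ⟨?_⟩
    rintro (a | b) h
    · exact H.irrefl h
    · exact K.irrefl h

/-- The vertex S-join `G₁ ∨̇_S G₂`: obtained from `S(G₁)` and `G₂` by joining each vertex
of `V(G₁)` to every vertex of `G₂`. -/
def vertexSJoin {V₁ V₂ : Type*} (G₁ : SimpleGraph V₁) (G₂ : SimpleGraph V₂) :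
    SimpleGraph ((V₁ ⊕ ↥G₁.edgeSet) ⊕ V₂) :=
  joinOn (Sgraph G₁) G₂ (fun x => x.isLeft)

/-- The edge S-join `G₁ ∨̱_S G₂`: obtained from `S(G₁)` and `G₂` by joining each inserted
vertex (each vertex of `I(G₁)`) to every vertex of `G₂`. -/
def edgeSJoin {V₁ V₂ : Type*} (G₁ : SimpleGraph V₁) (G₂ : SimpleGraph V₂) :
    SimpleGraph ((V₁ ⊕ ↥G₁.edgeSet) ⊕ V₂) :=
  joinOn (Sgraph G₁) G₂ (fun x => x.isRight)

/-- The vertex R-join `G₁ ∨̇_R G₂`. -/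
def vertexRJoin {V₁ V₂ : Type*} (G₁ : SimpleGraph V₁) (G₂ : SimpleGraph V₂) :
    SimpleGraph ((V₁ ⊕ ↥G₁.edgeSet) ⊕ V₂) :=
  joinOn (Rgraph G₁) G₂ (fun x => x.isLeft)

/-- The edge R-join `G₁ ∨̱_R G₂`. -/
def edgeRJoin {V₁ V₂ : Type*} (G₁ : SimpleGraph V₁) (G₂ : SimpleGraph V₂) :
    SimpleGraph ((V₁ ⊕ ↥G₁.edgeSet) ⊕ V₂) :=
  joinOn (Rgraph G₁) G₂ (fun x => x.isRight)

/-- The vertex Q-join `G₁ ∨̇_Q G₂`. -/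
def vertexQJoin {V₁ V₂ : Type*} (G₁ : SimpleGraph V₁) (G₂ : SimpleGraph V₂) :
    SimpleGraph ((V₁ ⊕ ↥G₁.edgeSet) ⊕ V₂) :=
  joinOn (Qgraph G₁) G₂ (fun x => x.isLeft)

/-- The edge Q-join `G₁ ∨̱_Q G₂`. -/
def edgeQJoin {V₁ V₂ : Type*} (G₁ : SimpleGraph V₁) (G₂ : SimpleGraph V₂) :
    SimpleGraph ((V₁ ⊕ ↥G₁.edgeSet) ⊕ V₂) :=
  joinOn (Qgraph G₁) G₂ (fun x => x.isRight)

/-- The vertex T-join `G₁ ∨̇_T G₂`. -/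
def vertexTJoin {V₁ V₂ : Type*} (G₁ : SimpleGraph V₁) (G₂ : SimpleGraph V₂) :
    SimpleGraph ((V₁ ⊕ ↥G₁.edgeSet) ⊕ V₂) :=
  joinOn (Tgraph G₁) G₂ (fun x => x.isLeft)

/-- The edge T-join `G₁ ∨̱_T G₂`. -/
def edgeTJoin {V₁ V₂ : Type*} (G₁ : SimpleGraph V₁) (G₂ : SimpleGraph V₂) :
    SimpleGraph ((V₁ ⊕ ↥G₁.edgeSet) ⊕ V₂) :=
  joinOn (Tgraph G₁) G₂ (fun x => x.isRight)

/-- Degree of a vertex in a graph on a finite vertex type. -/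
noncomputable def gdeg {V : Type*} [Finite V] (G : SimpleGraph V) (v : V) : ℕ :=
  haveI : Fintype ↥(G.neighborSet v) := Fintype.ofFinite _
  G.degree v

/-- The forgotten topological index (F-index): `F(G) = ∑_{v ∈ V(G)} d_G(v)³`. -/
noncomputable def Findex {V : Type*} [Finite V] (G : SimpleGraph V) : ℕ :=
  haveI := Fintype.ofFinite V
  ∑ v : V, gdeg G v ^ 3

/-- The first Zagreb index: `M₁(G) = ∑_{v ∈ V(G)} d_G(v)²`. -/
noncomputable def M1 {V : Type*} [Finite V] (G : SimpleGraph V) : ℕ :=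
  haveI := Fintype.ofFinite V
  ∑ v : V, gdeg G v ^ 2

/-- `M₄(G) = ∑_{v ∈ V(G)} d_G(v)⁴`. -/
noncomputable def M4 {V : Type*} [Finite V] (G : SimpleGraph V) : ℕ :=
  haveI := Fintype.ofFinite V
  ∑ v : V, gdeg G v ^ 4

/-- The hyper Zagreb index: `HM(G) = ∑_{uv ∈ E(G)} (d_G(u) + d_G(v))²`. -/
noncomputable def HM {V : Type*} [Finite V] (G : SimpleGraph V) : ℕ :=
  haveI : Fintype ↥G.edgeSet := Fintype.ofFinite _
  ∑ e : ↥G.edgeSet,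
    Sym2.lift ⟨fun u v => (gdeg G u + gdeg G v) ^ 2,
      fun u v => by dsimp only; rw [add_comm]⟩ (e : Sym2 V)

/-- The redefined Zagreb index:
`ReZM(G) = ∑_{uv ∈ E(G)} d_G(u) d_G(v) (d_G(u) + d_G(v))`. -/
noncomputable def ReZM {V : Type*} [Finite V] (G : SimpleGraph V) : ℕ :=
  haveI : Fintype ↥G.edgeSet := Fintype.ofFinite _
  ∑ e : ↥G.edgeSet,
    Sym2.lift ⟨fun u v => gdeg G u * gdeg G v * (gdeg G u + gdeg G v),
      fun u v => by dsimp only; ring⟩ (e : Sym2 V)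

/-- The number of edges of `G`. -/
noncomputable def numEdges {V : Type*} (G : SimpleGraph V) : ℕ :=
  Nat.card ↥G.edgeSet


section Aux

variable {V : Type*}

lemma gdeg_eq_natCard [Finite V] (G : SimpleGraph V) (v : V) :
    gdeg G v = Nat.card (G.neighborSet v) := by
  have h : gdeg G v = @SimpleGraph.degree _ G v (Fintype.ofFinite _) := rfl
  rw [h, ← @SimpleGraph.card_neighborSet_eq_degree _ G v (Fintype.ofFinite _),
    @Nat.card_eq_fintype_card _ (Fintype.ofFinite _)]

def sumSetEquiv {A B : Type*} (S : Set (A ⊕ B)) :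
    (↥(Sum.inl ⁻¹' S) ⊕ ↥(Sum.inr ⁻¹' S)) ≃ ↥S where
  toFun := fun x => match x with
    | .inl ⟨a, h⟩ => ⟨.inl a, h⟩
    | .inr ⟨b, h⟩ => ⟨.inr b, h⟩
  invFun := fun x => match x with
    | ⟨.inl a, h⟩ => .inl ⟨a, h⟩
    | ⟨.inr b, h⟩ => .inr ⟨b, h⟩
  left_inv := by rintro (⟨a, h⟩ | ⟨b, h⟩) <;> rfl
  right_inv := by rintro ⟨a | b, h⟩ <;> rfl

lemma natCard_sum_set {A B : Type*} [Finite A] [Finite B] (S : Set (A ⊕ B)) :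
    Nat.card S = Nat.card (Sum.inl ⁻¹' S) + Nat.card (Sum.inr ⁻¹' S) := by
  rw [← Nat.card_sum]
  exact (Nat.card_congr (sumSetEquiv S)).symm

variable {A B : Type*} [Finite A] [Finite B]

lemma joinOn_pre_inl_inl (H : SimpleGraph A) (K : SimpleGraph B) (P : A → Prop) (a : A) :
    Sum.inl ⁻¹' ((joinOn H K P).neighborSet (Sum.inl a)) = H.neighborSet a := rfl

lemma joinOn_pre_inl_inr (H : SimpleGraph A) (K : SimpleGraph B) (P : A → Prop) (a : A) :
    Sum.inr ⁻¹' ((joinOn H K P).neighborSet (Sum.inl a)) = {_b : B | P a} := rfl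

lemma joinOn_pre_inr_inl (H : SimpleGraph A) (K : SimpleGraph B) (P : A → Prop) (b : B) :
    Sum.inl ⁻¹' ((joinOn H K P).neighborSet (Sum.inr b)) = {a : A | P a} := rfl

lemma joinOn_pre_inr_inr (H : SimpleGraph A) (K : SimpleGraph B) (P : A → Prop) (b : B) :
    Sum.inr ⁻¹' ((joinOn H K P).neighborSet (Sum.inr b)) = K.neighborSet b := rfl

lemma gdeg_joinOn_inl_pos (H : SimpleGraph A) (K : SimpleGraph B) (P : A → Prop) (a : A)
    (hP : P a) : gdeg (joinOn H K P) (Sum.inl a) = gdeg H a + Nat.card B := by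
  rw [gdeg_eq_natCard, natCard_sum_set, joinOn_pre_inl_inl, joinOn_pre_inl_inr,
    gdeg_eq_natCard]
  congr 1
  have : {_b : B | P a} = (Set.univ : Set B) := by
    ext b; simp [hP]
  rw [this]
  exact Nat.card_congr (Equiv.Set.univ B)

lemma gdeg_joinOn_inl_neg (H : SimpleGraph A) (K : SimpleGraph B) (P : A → Prop) (a : A)
    (hP : ¬ P a) : gdeg (joinOn H K P) (Sum.inl a) = gdeg H a := by
  rw [gdeg_eq_natCard, natCard_sum_set, joinOn_pre_inl_inl, joinOn_pre_inl_inr,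
    gdeg_eq_natCard]
  have : {_b : B | P a} = (∅ : Set B) := by
    ext b; simp [hP]
  rw [this]
  simp

lemma gdeg_joinOn_inr (H : SimpleGraph A) (K : SimpleGraph B) (P : A → Prop) (b : B) :
    gdeg (joinOn H K P) (Sum.inr b) = Nat.card {a : A | P a} + gdeg K b := by
  rw [gdeg_eq_natCard, natCard_sum_set, joinOn_pre_inr_inl, joinOn_pre_inr_inr,
    gdeg_eq_natCard]

lemma gdeg_Rgraph_inl [Finite V] (G : SimpleGraph V) (v : V) :
    gdeg (Rgraph G) (Sum.inl v) = 2 * gdeg G v := by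
  classical
  rw [gdeg_eq_natCard, natCard_sum_set]
  have h1 : Sum.inl ⁻¹' ((Rgraph G).neighborSet (Sum.inl v)) = G.neighborSet v := rfl
  have h2 : Sum.inr ⁻¹' ((Rgraph G).neighborSet (Sum.inl v))
      = {e : ↥G.edgeSet | v ∈ (e : Sym2 V)} := rfl
  rw [h1, h2, gdeg_eq_natCard]
  have e1 : {e : ↥G.edgeSet | v ∈ (e : Sym2 V)} ≃ ↥(G.incidenceSet v) :=
    { toFun := fun e => ⟨e.1.1, e.1.2, e.2⟩
      invFun := fun e => ⟨⟨e.1, e.2.1⟩, e.2.2⟩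
      left_inv := fun e => rfl
      right_inv := fun e => rfl }
  have e2 : ↥(G.incidenceSet v) ≃ ↥(G.neighborSet v) :=
    G.incidenceSetEquivNeighborSet v
  rw [Nat.card_congr (e1.trans e2)]
  ring

lemma gdeg_Rgraph_inr [Finite V] (G : SimpleGraph V) (e : ↥G.edgeSet) :
    gdeg (Rgraph G) (Sum.inr e) = 2 := by
  rw [gdeg_eq_natCard, natCard_sum_set]
  have h1 : Sum.inl ⁻¹' ((Rgraph G).neighborSet (Sum.inr e))
      = {v : V | v ∈ (e : Sym2 V)} := rfl
  have h2 : Sum.inr ⁻¹' ((Rgraph G).neighborSet (Sum.inr e)) = (∅ : Set ↥G.edgeSet) := by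
    ext f; exact Iff.rfl
  rw [h1, h2]
  obtain ⟨z, hz⟩ := e
  induction z with
  | _ a b =>
    have hab : a ≠ b := (G.mem_edgeSet.mp hz).ne
    have hset : {v : V | v ∈ (s(a, b) : Sym2 V)} = ({a, b} : Set V) := by
      ext v; simp [Sym2.mem_iff]
    simp only [hset]
    rw [Nat.card_coe_set_eq, Set.ncard_pair hab]
    simp

def isRightSetEquiv {A B : Type*} :
    {x : A ⊕ B | x.isRight} ≃ B where
  toFun := fun x => match x with
    | ⟨.inr b, _⟩ => b
    | ⟨.inl _, h⟩ => absurd h (by simp)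
  invFun := fun b => ⟨.inr b, rfl⟩
  left_inv := by
    rintro ⟨(a | b), h⟩
    · simp at h
    · rfl
  right_inv := fun b => rfl

end Aux

section CyclePath

open SimpleGraph

lemma gdeg_cycle {n : ℕ} (hn : 3 ≤ n) (v : Fin n) : gdeg (cycleGraph n) v = 2 := by
  obtain ⟨k, rfl⟩ : ∃ k, n = k + 3 := ⟨n - 3, by omega⟩
  rw [gdeg_eq_natCard, Nat.card_eq_fintype_card, card_neighborSet_eq_degree,
    cycleGraph_degree_three_le]

lemma card_cycle_edges {n : ℕ} (hn : 3 ≤ n) :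
    Nat.card ↥(cycleGraph n).edgeSet = n := by
  obtain ⟨k, rfl⟩ : ∃ k, n = k + 3 := ⟨n - 3, by omega⟩
  rw [Nat.card_eq_fintype_card, ← SimpleGraph.edgeFinset_card]
  have h := SimpleGraph.sum_degrees_eq_twice_card_edges (cycleGraph (k + 3))
  have h2 : ∑ v : Fin (k + 3), (cycleGraph (k + 3)).degree v = 2 * (k + 3) := by
    rw [Finset.sum_congr rfl (fun v _ => cycleGraph_degree_three_le)]
    simp [mul_comm]
  rw [h2] at h
  omega

lemma gdeg_path {m : ℕ} (hm : 2 ≤ m) (b : Fin m) :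
    gdeg (pathGraph m) b = if b.val = 0 ∨ b.val = m - 1 then 1 else 2 := by
  rw [gdeg_eq_natCard, Nat.card_coe_set_eq]
  have hadj : ∀ u : Fin m, (pathGraph m).Adj b u ↔ b.val + 1 = u.val ∨ u.val + 1 = b.val :=
    fun u => pathGraph_adj
  by_cases h0 : b.val = 0
  · have : (pathGraph m).neighborSet b = {(⟨1, by omega⟩ : Fin m)} := by
      ext u
      simp only [SimpleGraph.mem_neighborSet, hadj, Set.mem_singleton_iff, Fin.ext_iff]
      omega
    rw [this, Set.ncard_singleton]
    simp [h0]
  · by_cases h1 : b.val = m - 1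
    · have : (pathGraph m).neighborSet b = {(⟨m - 2, by omega⟩ : Fin m)} := by
        ext u
        simp only [SimpleGraph.mem_neighborSet, hadj, Set.mem_singleton_iff, Fin.ext_iff]
        omega
      rw [this, Set.ncard_singleton]
      simp [h1]
    · have hb1 : 1 ≤ b.val := by omega
      have hb2 : b.val + 1 < m := by have := b.isLt; omega
      have : (pathGraph m).neighborSet b
          = {(⟨b.val + 1, by omega⟩ : Fin m), (⟨b.val - 1, by omega⟩ : Fin m)} := by
        ext u
        simp only [SimpleGraph.mem_neighborSet, hadj, Set.mem_insert_iff,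
          Set.mem_singleton_iff, Fin.ext_iff]
        omega
      rw [this, Set.ncard_pair (by simp only [ne_eq, Fin.ext_iff]; omega)]
      simp [h0, h1]

lemma path_sum {m : ℕ} (hm : 2 ≤ m) (c : ℕ) :
    ∑ b : Fin m, (gdeg (pathGraph m) b + c) ^ 3
      = 2 * (1 + c) ^ 3 + (m - 2) * (2 + c) ^ 3 := by
  classical
  have h : ∀ b : Fin m, (gdeg (pathGraph m) b + c) ^ 3
      = if b.val = 0 ∨ b.val = m - 1 then (1 + c) ^ 3 else (2 + c) ^ 3 := by
    intro b
    rw [gdeg_path hm]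
    split_ifs <;> rfl
  rw [Finset.sum_congr rfl (fun b _ => h b), Finset.sum_ite, Finset.sum_const,
    Finset.sum_const, smul_eq_mul, smul_eq_mul]
  have hcard : (Finset.univ.filter (fun b : Fin m => b.val = 0 ∨ b.val = m - 1)).card = 2 := by
    have : Finset.univ.filter (fun b : Fin m => b.val = 0 ∨ b.val = m - 1)
        = {(⟨0, by omega⟩ : Fin m), (⟨m - 1, by omega⟩ : Fin m)} := by
      ext b
      simp [Fin.ext_iff]
    rw [this, Finset.card_pair (by simp only [ne_eq, Fin.ext_iff]; omega)]
  have hcard2 : (Finset.univ.filter (fun b : Fin m => ¬(b.val = 0 ∨ b.val = m - 1))).card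
      = m - 2 := by
    have htot := Finset.card_filter_add_card_filter_not
      (s := (Finset.univ : Finset (Fin m)))
      (p := fun b : Fin m => b.val = 0 ∨ b.val = m - 1)
    rw [hcard] at htot
    simp only [Finset.card_univ, Fintype.card_fin] at htot
    omega
  rw [hcard, hcard2]

lemma Findex_eq {W : Type*} [Fintype W] (G : SimpleGraph W) :
    Findex G = ∑ v : W, gdeg G v ^ 3 := by
  unfold Findex
  congr 1
  exact congrArg (fun i => @Finset.univ W i) (Subsingleton.elim _ _)

end CyclePath

theorem Findex_edgeRJoin_ex15 (n m : ℕ) (hn : 3 ≤ n) (hm : 2 ≤ m) :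
    (Findex (edgeRJoin (SimpleGraph.cycleGraph n) (SimpleGraph.pathGraph m)) : ℤ) =
      (n : ℤ) * ((m : ℤ) + 2) ^ 3 + (m : ℤ) * (n : ℤ) ^ 3 + 6 * ((m : ℤ) - 1) * (n : ℤ) ^ 2 + 12 * (m : ℤ) * (n : ℤ) + 8 * (m : ℤ) + 46 * (n : ℤ) - 14 := by
  classical
  have hE : Nat.card ↥(SimpleGraph.cycleGraph n).edgeSet = n := card_cycle_edges hn
  have key : Findex (edgeRJoin (SimpleGraph.cycleGraph n) (SimpleGraph.pathGraph m))
      = n * 64 + n * (m + 2) ^ 3 + (2 * (1 + n) ^ 3 + (m - 2) * (2 + n) ^ 3) := by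
    unfold edgeRJoin
    rw [Findex_eq, Fintype.sum_sum_type, Fintype.sum_sum_type]
    have hS1 : ∀ v : Fin n,
        gdeg (joinOn (Rgraph (SimpleGraph.cycleGraph n)) (SimpleGraph.pathGraph m)
          (fun x => x.isRight)) (Sum.inl (Sum.inl v)) = 4 := by
      intro v
      rw [gdeg_joinOn_inl_neg _ _ _ _ (by simp), gdeg_Rgraph_inl, gdeg_cycle hn]
    have hS2 : ∀ e : ↥(SimpleGraph.cycleGraph n).edgeSet,
        gdeg (joinOn (Rgraph (SimpleGraph.cycleGraph n)) (SimpleGraph.pathGraph m)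
          (fun x => x.isRight)) (Sum.inl (Sum.inr e)) = 2 + m := by
      intro e
      rw [gdeg_joinOn_inl_pos _ _ _ _ (by simp), gdeg_Rgraph_inr, Nat.card_eq_fintype_card,
        Fintype.card_fin]
    have hS3 : ∀ b : Fin m,
        gdeg (joinOn (Rgraph (SimpleGraph.cycleGraph n)) (SimpleGraph.pathGraph m)
          (fun x => x.isRight)) (Sum.inr b) = gdeg (SimpleGraph.pathGraph m) b + n := by
      intro b
      rw [gdeg_joinOn_inr, Nat.card_congr isRightSetEquiv, hE, add_comm]
    simp only [hS1, hS2, hS3, Finset.sum_const, Finset.card_univ, Fintype.card_fin,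
      smul_eq_mul]
    rw [path_sum hm n, ← Nat.card_eq_fintype_card, hE]
    ring
  rw [key]
  have hm2 : 2 ≤ m := hm
  push_cast [Nat.cast_sub hm2]
  ring
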